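/- arXiv:1406.1790 — 6 statements merged into one kernel-verified Lean document; each statement's English description precedes it below -/
import Mathlib

section
/- For positive integers n and j ≤ n/2 and any p ∈ (0,1), if j > pn then C(n,j)·p^j·(1−p)^{n−j} < exp(−((j−pn)² − 2)/(2j)). -/
lemma log_quad_bound {x : ℝ} (hx : 0 < x) (hx1 : x ≤ 1) :
    Real.log x ≤ (x - 1) - (x - 1) ^ 2 / 2 := by
  have h : AntitoneOn (fun y : ℝ => y - 1 - (y - 1) ^ 2 / 2 - Real.log y)
      (Set.Icc x 1) := by
    apply antitoneOn_of_deriv_nonpos (convex_Icc x 1)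
    · apply ContinuousOn.sub
      · fun_prop
      · apply Real.continuousOn_log.mono
        intro y hy
        simp only [Set.mem_Icc] at hy
        simp only [Set.mem_compl_iff, Set.mem_singleton_iff]
        intro h0; rw [h0] at hy; linarith [hy.1]
    · intro y hy
      rw [interior_Icc] at hy
      have hy0 : 0 < y := lt_trans hx hy.1
      have hd : HasDerivAt (fun y : ℝ => y - 1 - (y - 1) ^ 2 / 2 - Real.log y)
          (1 - (↑2 * (y - 1) ^ (2 - 1) * 1) / 2 - y⁻¹) y := by
        exact (((hasDerivAt_id y).sub_const 1).sub
          ((((hasDerivAt_id y).sub_const 1).pow 2).div_const 2)).sub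
          (Real.hasDerivAt_log hy0.ne')
      exact hd.differentiableAt.differentiableWithinAt
    · intro y hy
      rw [interior_Icc] at hy
      have hy0 : 0 < y := lt_trans hx hy.1
      have hd : HasDerivAt (fun y : ℝ => y - 1 - (y - 1) ^ 2 / 2 - Real.log y)
          (1 - (↑2 * (y - 1) ^ (2 - 1) * 1) / 2 - y⁻¹) y := by
        exact (((hasDerivAt_id y).sub_const 1).sub
          ((((hasDerivAt_id y).sub_const 1).pow 2).div_const 2)).sub
          (Real.hasDerivAt_log hy0.ne')
      rw [hd.deriv]
      have : 1 - (↑2 * (y - 1) ^ (2 - 1) * 1) / 2 - y⁻¹ = -((y - 1) ^ 2) / y := by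
        field_simp
        ring
      rw [this]
      apply div_nonpos_of_nonpos_of_nonneg
      · nlinarith [sq_nonneg (y - 1)]
      · exact hy0.le
  have h1 := h (Set.mem_Icc.2 ⟨le_rfl, hx1⟩) (Set.mem_Icc.2 ⟨hx1, le_rfl⟩) hx1
  simp only [Real.log_one] at h1
  nlinarith [h1]

theorem binom_coeff_upper_bound (n j : ℕ) (hn : 0 < n) (hj : 0 < j)
    (hjn : (j : ℝ) ≤ n / 2) (p : ℝ) (hp : p ∈ Set.Ioo (0 : ℝ) 1)
    (hjpn : (j : ℝ) > p * n) :
    (n.choose j : ℝ) * p ^ j * (1 - p) ^ (n - j) <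
      Real.exp (-((((j : ℝ) - p * n) ^ 2 - 2) / (2 * j))) := by
  obtain ⟨hp0, hp1⟩ := hp
  have hN : (0:ℝ) < n := by exact_mod_cast hn
  have hJ : (0:ℝ) < j := by exact_mod_cast hj
  have hjn' : (j:ℝ) < n := by linarith
  have hjnn : j ≤ n := by exact_mod_cast hjn'.le
  set q : ℝ := j / n with hq
  have hq0 : 0 < q := div_pos hJ hN
  have hq1 : q < 1 := (div_lt_one hN).2 hjn'
  have hpq : p < q := by rw [hq, lt_div_iff₀ hN]; linarith
  have hcast : ((n - j : ℕ) : ℝ) = (n : ℝ) - j := by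
    rw [Nat.cast_sub hjnn]
  -- Step 1: choose * q^j * (1-q)^(n-j) ≤ 1
  have step1 : (n.choose j : ℝ) * q ^ j * (1 - q) ^ (n - j) ≤ 1 := by
    have hsum : ∑ k ∈ Finset.range (n+1), q ^ k * (1 - q) ^ (n - k) * (n.choose k : ℝ) = 1 := by
      rw [← add_pow]
      simp
    calc (n.choose j : ℝ) * q ^ j * (1 - q) ^ (n - j)
        = q ^ j * (1 - q) ^ (n - j) * (n.choose j : ℝ) := by ring
      _ ≤ ∑ k ∈ Finset.range (n+1), q ^ k * (1 - q) ^ (n - k) * (n.choose k : ℝ) := by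
          apply Finset.single_le_sum (f := fun k => q ^ k * (1 - q) ^ (n - k) * (n.choose k : ℝ))
          · intro k _
            have : (0:ℝ) ≤ 1 - q := by linarith
            positivity
          · exact Finset.mem_range.2 (Nat.lt_succ_of_le hjnn)
      _ = 1 := hsum
  -- Step 2: factor p^j(1-p)^(n-j) through exp
  set S : ℝ := (j : ℝ) * Real.log (p / q) + ((n - j : ℕ) : ℝ) * Real.log ((1 - p) / (1 - q))
    with hSdef
  have hpq0 : 0 < p / q := div_pos hp0 hq0
  have h1pq0 : 0 < (1 - p) / (1 - q) := div_pos (by linarith) (by linarith)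
  have hfac : p ^ j * (1 - p) ^ (n - j) = q ^ j * (1 - q) ^ (n - j) * Real.exp S := by
    rw [hSdef, Real.exp_add]
    rw [show ((j:ℝ) * Real.log (p / q)) = ((j:ℕ):ℝ) * Real.log (p/q) from rfl]
    rw [Real.exp_nat_mul, Real.exp_nat_mul, Real.exp_log hpq0, Real.exp_log h1pq0]
    have e1 : q * (p / q) = p := by rw [mul_comm, div_mul_cancel₀ _ hq0.ne']
    have e2 : (1 - q) * ((1 - p) / (1 - q)) = 1 - p := by
      rw [mul_comm, div_mul_cancel₀ _ (by linarith : (0:ℝ) < 1 - q).ne']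
    symm
    calc q ^ j * (1 - q) ^ (n - j) * ((p / q) ^ j * ((1 - p) / (1 - q)) ^ (n - j))
        = (q * (p / q)) ^ j * ((1 - q) * ((1 - p) / (1 - q))) ^ (n - j) := by
          rw [mul_pow, mul_pow]; ring
      _ = p ^ j * (1 - p) ^ (n - j) := by rw [e1, e2]
  -- Step 3: bound S
  have hlog1 : Real.log (p / q) ≤ (p / q - 1) - (p / q - 1) ^ 2 / 2 :=
    log_quad_bound hpq0 (by rw [div_le_one hq0]; linarith)
  have hlog2 : Real.log ((1 - p) / (1 - q)) ≤ (1 - p) / (1 - q) - 1 :=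
    Real.log_le_sub_one_of_pos h1pq0
  have hSle : S ≤ -(((j:ℝ) - p * n) ^ 2) / (2 * j) := by
    have hb : S ≤ (j : ℝ) * ((p / q - 1) - (p / q - 1) ^ 2 / 2)
        + ((n : ℝ) - j) * ((1 - p) / (1 - q) - 1) := by
      rw [hSdef, hcast]
      have h1 : (j:ℝ) * Real.log (p / q) ≤ (j:ℝ) * ((p / q - 1) - (p / q - 1) ^ 2 / 2) :=
        mul_le_mul_of_nonneg_left hlog1 hJ.le
      have h2 : ((n:ℝ) - j) * Real.log ((1 - p) / (1 - q)) ≤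
          ((n:ℝ) - j) * ((1 - p) / (1 - q) - 1) :=
        mul_le_mul_of_nonneg_left hlog2 (by linarith)
      linarith
    have heq : (j : ℝ) * ((p / q - 1) - (p / q - 1) ^ 2 / 2)
        + ((n : ℝ) - j) * ((1 - p) / (1 - q) - 1) = -(((j:ℝ) - p * n) ^ 2) / (2 * j) := by
      rw [hq]
      have hNne : (n:ℝ) ≠ 0 := hN.ne'
      have hJne : (j:ℝ) ≠ 0 := hJ.ne'
      have hNJ : (n:ℝ) - j ≠ 0 := by linarith
      have h1q : 1 - (j:ℝ)/n = ((n:ℝ) - j)/n := by field_simp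
      rw [h1q]
      field_simp
      ring
    linarith
  have hSlt : S < -((((j : ℝ) - p * n) ^ 2 - 2) / (2 * j)) := by
    have h2J : (0:ℝ) < 2 * j := by linarith
    have : ((((j : ℝ) - p * n) ^ 2 - 2) / (2 * j)) < (((j:ℝ) - p * n) ^ 2) / (2 * j) :=
      (div_lt_div_iff_of_pos_right h2J).2 (by linarith)
    rw [neg_div] at hSle
    linarith [hSle, this]
  calc (n.choose j : ℝ) * p ^ j * (1 - p) ^ (n - j)
      = ((n.choose j : ℝ) * q ^ j * (1 - q) ^ (n - j)) * Real.exp S := by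
        rw [mul_assoc, hfac]; ring
    _ ≤ 1 * Real.exp S := mul_le_mul_of_nonneg_right step1 (Real.exp_pos S).le
    _ = Real.exp S := one_mul _
    _ < Real.exp (-((((j : ℝ) - p * n) ^ 2 - 2) / (2 * j))) := Real.exp_lt_exp.2 hSlt
end

section
/- For positive integers j with pn < j and p ∈ (0,1), ∑_{k=j}^{n} C(n,k)·p^k·(1−p)^{n−k} ≤ C(n,j)·p^j·(1−p)^{n−j} · (1 + 1/s), where s = (j−pn)/(j−pj). -/
theorem binomial_tail_geometric_bound (n j : ℕ) (p : ℝ)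
    (hp : p ∈ Set.Ioo (0 : ℝ) 1) (hj : 0 < j) (hjn : j ≤ n)
    (hpnj : p * n < j) (s : ℝ) (hs : s = ((j : ℝ) - p * n) / ((j : ℝ) - p * j)) :
    ∑ k ∈ Finset.Icc j n, (n.choose k : ℝ) * p ^ k * (1 - p) ^ (n - k) ≤
      (n.choose j : ℝ) * p ^ j * (1 - p) ^ (n - j) * (1 + 1 / s) := by
  obtain ⟨hp0, hp1⟩ := hp
  have h1p : (0:ℝ) < 1 - p := by linarith
  have hjn' : (j:ℝ) ≤ (n:ℝ) := by exact_mod_cast hjn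
  have hj' : (1:ℝ) ≤ (j:ℝ) := by exact_mod_cast hj
  set x : ℕ → ℝ := fun k => (n.choose k : ℝ) * p ^ k * (1 - p) ^ (n - k) with hxdef
  set r : ℝ := ((n:ℝ) - j) * p / (((j:ℝ) + 1) * (1 - p)) with hr
  have hden : (0:ℝ) < ((j:ℝ)+1) * (1-p) := by positivity
  have hr0 : 0 ≤ r := by
    apply div_nonneg _ hden.le
    nlinarith
  have ha : 0 < (j:ℝ) - p * n := by linarith
  have hb : 0 < (j:ℝ) - p * j := by nlinarith
  have hr1 : r < 1 := by
    rw [hr, div_lt_one hden]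
    nlinarith
  have h1r : 0 < 1 - r := by linarith
  have hs0 : 0 < s := by rw [hs]; exact div_pos ha hb
  have hxnn : ∀ k, 0 ≤ x k := by
    intro k
    simp only [hxdef]
    positivity
  have hstep : ∀ k, j ≤ k → k < n → x (k+1) ≤ r * x k := by
    intro k hjk hkn
    have hchoose : (n.choose (k+1) : ℝ) * ((k:ℝ)+1) = (n.choose k : ℝ) * ((n:ℝ) - k) := by
      have h := Nat.choose_succ_right_eq n k
      have hc : ((n.choose (k+1) * (k+1) : ℕ) : ℝ) = ((n.choose k * (n-k) : ℕ) : ℝ) := by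
        exact_mod_cast congrArg Nat.cast h
      push_cast [Nat.cast_sub hkn.le] at hc
      linarith
    have hnk : n - k = (n - (k+1)) + 1 := by omega
    have hc0 : (0:ℝ) ≤ (n.choose k : ℝ) := by positivity
    have hc0' : (0:ℝ) ≤ (n.choose (k+1) : ℝ) := by positivity
    have hjk' : (j:ℝ) ≤ (k:ℝ) := by exact_mod_cast hjk
    have hkn' : (k:ℝ) ≤ (n:ℝ) := by exact_mod_cast hkn.le
    have key : (n.choose (k+1) : ℝ) * p ≤ r * ((n.choose k : ℝ) * (1-p)) := by
      rw [hr]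
      rw [div_mul_eq_mul_div, le_div_iff₀ hden]
      have hpq : (0:ℝ) < p * (1-p) := mul_pos hp0 h1p
      have hch2 : (n.choose (k+1) : ℝ) * ((k:ℝ)+1) * (p*(1-p)) = (n.choose k : ℝ) * ((n:ℝ)-k) * (p*(1-p)) := by
        rw [hchoose]
      nlinarith [mul_nonneg (mul_nonneg hc0' hpq.le) (sub_nonneg.mpr hjk'),
        mul_nonneg (mul_nonneg hc0 hpq.le) (sub_nonneg.mpr hjk')]
    have e1 : x (k+1) = ((n.choose (k+1) : ℝ) * p) * (p^k * (1-p)^(n-(k+1))) := by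
      simp only [hxdef]
      ring
    have e2 : r * x k = (r * ((n.choose k : ℝ) * (1-p))) * (p^k * (1-p)^(n-(k+1))) := by
      simp only [hxdef, hnk]
      ring
    rw [e1, e2]
    apply mul_le_mul_of_nonneg_right key
    positivity
  have hgeom : ∀ m, j + m ≤ n → x (j + m) ≤ x j * r ^ m := by
    intro m
    induction m with
    | zero => intro _; simp
    | succ m ih =>
      intro hm
      have h2 : x (j+m+1) ≤ r * x (j+m) := hstep (j+m) (by omega) (by omega)
      calc x (j + (m+1)) = x (j+m+1) := by ring_nf
        _ ≤ r * x (j+m) := h2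
        _ ≤ r * (x j * r^m) := mul_le_mul_of_nonneg_left (ih (by omega)) hr0
        _ = x j * r^(m+1) := by ring
  have hsum1 : ∑ k ∈ Finset.Icc j n, x k ≤ ∑ i ∈ Finset.range (n - j + 1), x j * r ^ i := by
    rw [← Finset.Ico_add_one_right_eq_Icc, Finset.sum_Ico_eq_sum_range]
    have hrw : n + 1 - j = n - j + 1 := by omega
    rw [hrw]
    apply Finset.sum_le_sum
    intro i hi
    simp only [Finset.mem_range] at hi
    exact hgeom i (by omega)
  have hsum2 : ∑ i ∈ Finset.range (n - j + 1), x j * r ^ i ≤ x j * (1 + 1/s) := by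
    rw [← Finset.mul_sum]
    apply mul_le_mul_of_nonneg_left _ (hxnn j)
    have hgs : ∑ i ∈ Finset.range (n - j + 1), r ^ i = (r ^ (n-j+1) - 1)/(r - 1) :=
      geom_sum_eq (by linarith) _
    rw [hgs]
    have hrp : 0 ≤ r ^ (n-j+1) := pow_nonneg hr0 _
    have h1 : (r ^ (n-j+1) - 1)/(r - 1) = (1 - r ^ (n-j+1))/(1 - r) := by
      rw [div_eq_div_iff (by linarith) (by linarith)]
      ring
    rw [h1]
    have h2 : (1 - r ^ (n-j+1))/(1 - r) ≤ 1/(1-r) := by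
      gcongr
      linarith
    refine h2.trans ?_
    have h1s : 1 + 1/s = (((j:ℝ)-p*n) + ((j:ℝ)-p*j))/((j:ℝ)-p*n) := by
      rw [hs, one_div_div]
      field_simp
    have hrv : 1 - r = (((j:ℝ) - p*n) + (1-p))/(((j:ℝ)+1)*(1-p)) := by
      rw [hr]
      field_simp
      ring
    rw [h1s, hrv, one_div_div, div_le_div_iff₀ (by linarith) ha]
    nlinarith [mul_pos ha ha, mul_pos hb h1p]
  calc ∑ k ∈ Finset.Icc j n, x k ≤ ∑ i ∈ Finset.range (n - j + 1), x j * r ^ i := hsum1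
    _ ≤ x j * (1 + 1/s) := hsum2
    _ = (n.choose j : ℝ) * p ^ j * (1 - p) ^ (n - j) * (1 + 1 / s) := by simp only [hxdef]
end

section
/- Fix integers n ≥ 2 and 1 < j ≤ n. The polynomial Q_j(x) = (j−1)·C(n−1,j−1)·x^{j−1} − ∑_{k=1}^{j−1} C(n−1,k−1)·x^{k−1} has exactly one positive real root; moreover Q_j is negative at x = 0 and tends to +∞ as x → ∞. -/
theorem Q_unique_positive_root (n j : ℕ) (hn : 2 ≤ n) (hj : 1 < j) (hjn : j ≤ n)
    (Q : ℝ → ℝ)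
    (hQ : ∀ x : ℝ, Q x = ((j : ℝ) - 1) * ((n - 1).choose (j - 1) : ℝ) * x ^ (j - 1) -
      ∑ k ∈ Finset.Icc 1 (j - 1), ((n - 1).choose (k - 1) : ℝ) * x ^ (k - 1)) :
    (∃! x : ℝ, 0 < x ∧ Q x = 0) ∧
    Q 0 < 0 ∧
    Filter.Tendsto Q Filter.atTop Filter.atTop := by
  have hj1 : 1 ≤ j - 1 := by omega
  set c : ℝ := ((j : ℝ) - 1) * ((n - 1).choose (j - 1) : ℝ) with hc
  have hjR : (1 : ℝ) < (j : ℝ) := by exact_mod_cast hj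
  have hchoose : (1 : ℝ) ≤ ((n - 1).choose (j - 1) : ℝ) := by
    exact_mod_cast Nat.one_le_iff_ne_zero.mpr (Nat.choose_pos (by omega : j - 1 ≤ n - 1)).ne'
  have hc1 : 1 ≤ c := by
    have h2j : (2 : ℝ) ≤ (j : ℝ) := by exact_mod_cast hj
    have : (1 : ℝ) ≤ (j : ℝ) - 1 := by linarith
    nlinarith
  have hcpos : 0 < c := by linarith
  -- Q 0 = -1
  have hQ0 : Q 0 = -1 := by
    rw [hQ]
    have h1 : (0 : ℝ) ^ (j - 1) = 0 := zero_pow (by omega)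
    rw [h1]
    have h2 : ∑ k ∈ Finset.Icc 1 (j - 1), ((n - 1).choose (k - 1) : ℝ) * (0 : ℝ) ^ (k - 1)
        = 1 := by
      rw [Finset.sum_eq_single 1]
      · simp
      · intro k hk hk1
        have : k - 1 ≠ 0 := by
          simp only [Finset.mem_Icc] at hk; omega
        rw [zero_pow this, mul_zero]
      · intro h
        exact absurd (Finset.mem_Icc.mpr ⟨le_refl 1, hj1⟩) h
    rw [h2]; ring
  have hQ0neg : Q 0 < 0 := by rw [hQ0]; norm_num
  have hne : (Finset.Icc 1 (j - 1)).Nonempty := ⟨1, Finset.mem_Icc.mpr ⟨le_refl 1, hj1⟩⟩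
  -- bound coefficients
  set A : ℝ := ∑ k ∈ Finset.Icc 1 (j - 1), ((n - 1).choose (k - 1) : ℝ) with hA
  have hAnn : 0 ≤ A := Finset.sum_nonneg fun k _ => by positivity
  -- tendsto atTop
  have hbound : ∀ x : ℝ, max 1 A ≤ x → x - A ≤ Q x := by
    intro x hx
    have hx1 : (1 : ℝ) ≤ x := le_trans (le_max_left _ _) hx
    have hxA : A ≤ x := le_trans (le_max_right _ _) hx
    have hx0 : 0 ≤ x := by linarith
    rw [hQ]
    have hS : ∑ k ∈ Finset.Icc 1 (j - 1), ((n - 1).choose (k - 1) : ℝ) * x ^ (k - 1)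
        ≤ A * x ^ (j - 2) := by
      rw [hA, Finset.sum_mul]
      apply Finset.sum_le_sum
      intro k hk
      have hk' : k - 1 ≤ j - 2 := by
        simp only [Finset.mem_Icc] at hk; omega
      exact mul_le_mul_of_nonneg_left (pow_le_pow_right₀ hx1 hk') (by positivity)
    have hpow : x ^ (j - 1) = x ^ (j - 2) * x := by
      rw [← pow_succ]
      congr 1
      omega
    have hxp1 : (1 : ℝ) ≤ x ^ (j - 2) := one_le_pow₀ hx1
    have hcxA : 0 ≤ c * x - A := by nlinarith
    have : x ^ (j - 2) * (c * x - A) ≥ 1 * (c * x - A) :=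
      mul_le_mul_of_nonneg_right hxp1 hcxA
    nlinarith [this]
  have htend : Filter.Tendsto Q Filter.atTop Filter.atTop := by
    apply Filter.tendsto_atTop_mono' _ _ (Filter.tendsto_atTop_add_const_right _ (-A) Filter.tendsto_id)
    filter_upwards [Filter.eventually_ge_atTop (max 1 A)] with x hx
    simpa [sub_eq_add_neg] using hbound x hx
  -- continuity
  have hQcont : Continuous Q := by
    have hQf : Q = fun x => c * x ^ (j - 1) -
        ∑ k ∈ Finset.Icc 1 (j - 1), ((n - 1).choose (k - 1) : ℝ) * x ^ (k - 1) :=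
      funext hQ
    rw [hQf]
    apply Continuous.sub
    · exact continuous_const.mul (continuous_pow _)
    · exact continuous_finset_sum _ fun k _ => continuous_const.mul (continuous_pow _)
  -- existence of a root
  obtain ⟨M, hM1, hQM⟩ : ∃ M : ℝ, 1 ≤ M ∧ 1 ≤ Q M := by
    have := (Filter.eventually_ge_atTop (1 : ℝ)).and (htend.eventually_ge_atTop 1)
    obtain ⟨M, hM⟩ := this.exists
    exact ⟨M, hM.1, hM.2⟩
  have hM0 : (0 : ℝ) ≤ M := by linarith
  have hivt := intermediate_value_Icc hM0 hQcont.continuousOn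
  have h0mem : (0 : ℝ) ∈ Set.Icc (Q 0) (Q M) := ⟨le_of_lt hQ0neg, by linarith⟩
  obtain ⟨x₀, hx₀mem, hx₀⟩ := hivt h0mem
  have hx₀pos : 0 < x₀ := by
    rcases lt_or_eq_of_le hx₀mem.1 with h | h
    · exact h
    · exfalso; rw [← h] at hx₀; rw [hQ0] at hx₀; norm_num at hx₀
  -- no two distinct positive roots
  have huniq : ∀ x y : ℝ, 0 < x → 0 < y → Q x = 0 → Q y = 0 → x < y → False := by
    intro x y hx hy hQx hQy hxy
    rw [hQ] at hQx hQy
    have hSx : c * x ^ (j - 1) = ∑ k ∈ Finset.Icc 1 (j - 1),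
        ((n - 1).choose (k - 1) : ℝ) * x ^ (k - 1) := by linarith [sub_eq_zero.mp hQx]
    have hSy : c * y ^ (j - 1) = ∑ k ∈ Finset.Icc 1 (j - 1),
        ((n - 1).choose (k - 1) : ℝ) * y ^ (k - 1) := by linarith [sub_eq_zero.mp hQy]
    have key : (∑ k ∈ Finset.Icc 1 (j - 1), ((n - 1).choose (k - 1) : ℝ) * y ^ (k - 1)) * x ^ (j - 1)
        < (∑ k ∈ Finset.Icc 1 (j - 1), ((n - 1).choose (k - 1) : ℝ) * x ^ (k - 1)) * y ^ (j - 1) := by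
      rw [Finset.sum_mul, Finset.sum_mul]
      apply Finset.sum_lt_sum_of_nonempty hne
      intro k hk
      simp only [Finset.mem_Icc] at hk
      have hck : (0 : ℝ) < ((n - 1).choose (k - 1) : ℝ) := by
        exact_mod_cast Nat.choose_pos (by omega : k - 1 ≤ n - 1)
      have hsplit : ∀ z : ℝ, z ^ (j - 1) = z ^ (k - 1) * z ^ (j - k) := by
        intro z
        rw [← pow_add]
        congr 1
        omega
      rw [hsplit x, hsplit y]
      have hyx : x ^ (j - k) < y ^ (j - k) :=
        pow_lt_pow_left₀ hxy (le_of_lt hx) (by omega)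
      have hxk : (0 : ℝ) < x ^ (k - 1) := pow_pos hx _
      have hyk : (0 : ℝ) < y ^ (k - 1) := pow_pos hy _
      calc ((n - 1).choose (k - 1) : ℝ) * y ^ (k - 1) * (x ^ (k - 1) * x ^ (j - k))
          < ((n - 1).choose (k - 1) : ℝ) * y ^ (k - 1) * (x ^ (k - 1) * y ^ (j - k)) := by
            apply mul_lt_mul_of_pos_left _ (by positivity)
            exact mul_lt_mul_of_pos_left hyx hxk
        _ = ((n - 1).choose (k - 1) : ℝ) * x ^ (k - 1) * (y ^ (k - 1) * y ^ (j - k)) := by ring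
    rw [← hSx, ← hSy] at key
    have hxp : (0 : ℝ) < x ^ (j - 1) := pow_pos hx _
    have hyp : (0 : ℝ) < y ^ (j - 1) := pow_pos hy _
    nlinarith [key]
  refine ⟨⟨x₀, ⟨hx₀pos, hx₀⟩, ?_⟩, hQ0neg, htend⟩
  intro y hy
  rcases lt_trichotomy y x₀ with h | h | h
  · exact absurd (huniq y x₀ hy.1 hx₀pos hy.2 hx₀ h) not_false
  · exact h
  · exact absurd (huniq x₀ y hx₀pos hy.1 hx₀ hy.2 h) not_false
end

section
/- Fix integers n ≥ 2 and 1 < j < n. Then Q_{j+1}(j/(n−j)) > 0, where Q_{j+1}(x) = j·C(n−1,j)·x^{j} − ∑_{k=1}^{j} C(n−1,k−1)·x^{k−1}. -/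
theorem Q_succ_positive (n j : ℕ) (hn : 2 ≤ n) (hj : 1 < j) (hjn : j < n)
    (Q : ℝ → ℝ)
    (hQ : ∀ x : ℝ, Q x = (j : ℝ) * ((n - 1).choose j : ℝ) * x ^ j -
      ∑ k ∈ Finset.Icc 1 j, ((n - 1).choose (k - 1) : ℝ) * x ^ (k - 1)) :
    Q ((j : ℝ) / ((n : ℝ) - j)) > 0 := by
  set x : ℝ := (j : ℝ) / ((n : ℝ) - j) with hxdef
  have hjn' : (j:ℝ) < n := by exact_mod_cast hjn
  have hnj : (0:ℝ) < (n:ℝ) - j := by linarith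
  have hjpos : (0:ℝ) < j := by
    have : 0 < j := by omega
    exact_mod_cast this
  have hx : 0 < x := div_pos hjpos hnj
  set g : ℕ → ℝ := fun m => ((n-1).choose m : ℝ) * x ^ m with hg
  -- step lemma: strictly increasing as long as m+1 < j
  have step : ∀ m : ℕ, m + 1 < j → g m < g (m+1) := by
    intro m hm
    have hc : ((n-1).choose (m+1)) * (m+1) = (n-1).choose m * ((n-1) - m) :=
      Nat.choose_succ_right_eq _ _
    have hcpos : 0 < (n-1).choose m := Nat.choose_pos (by omega)
    have hcpos' : (0:ℝ) < ((n-1).choose m : ℝ) := by exact_mod_cast hcpos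
    have hcastc : (((n-1).choose (m+1)) : ℝ) * ((m:ℝ)+1)
        = ((n-1).choose m : ℝ) * ((n:ℝ) - 1 - m) := by
      have h := congrArg (Nat.cast : ℕ → ℝ) hc
      push_cast [Nat.cast_sub (show m ≤ n-1 by omega),
        Nat.cast_sub (show 1 ≤ n by omega)] at h
      linarith
    have hmR : (m:ℝ) + 1 < j := by exact_mod_cast hm
    -- key inequality over ℝ
    have key : ((n-1).choose m : ℝ) * ((n:ℝ) - j) < (((n-1).choose (m+1)) : ℝ) * j := by
      have hm1 : (0:ℝ) < (m:ℝ) + 1 := by positivity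
      rw [← mul_lt_mul_iff_left₀ hm1]
      have : (((n-1).choose (m+1)) : ℝ) * (j:ℝ) * ((m:ℝ)+1)
          = ((n-1).choose m : ℝ) * ((n:ℝ) - 1 - m) * j := by
        rw [mul_right_comm, hcastc]
      rw [this]
      have hn0 : (0:ℝ) < (n:ℝ) := by positivity
      nlinarith [mul_lt_mul_of_pos_left hmR hn0]
    have hlt : ((n-1).choose m : ℝ) < (((n-1).choose (m+1)) : ℝ) * x := by
      rw [hxdef, ← mul_div_assoc, lt_div_iff₀ hnj]
      linarith
    have hpm : (0:ℝ) < x ^ m := by positivity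
    calc g m = ((n-1).choose m : ℝ) * x ^ m := rfl
      _ < (((n-1).choose (m+1)) : ℝ) * x * x ^ m := by
          exact mul_lt_mul_of_pos_right hlt hpm
      _ = g (m+1) := by simp [hg, pow_succ]; ring
  -- monotone up to j-1
  have mono : ∀ b : ℕ, b ≤ j - 1 → ∀ a ≤ b, g a ≤ g b := by
    intro b
    induction b with
    | zero => intro _ a ha; interval_cases a; rfl
    | succ b ih =>
      intro hb a ha
      rcases Nat.eq_or_lt_of_le ha with h | h
      · rw [h]
      · have ha' : a ≤ b := Nat.lt_succ_iff.mp h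
        exact le_trans (ih (by omega) a ha') (le_of_lt (step b (by omega)))
  have gstrict : g 0 < g (j-1) := by
    have h1 : g 0 ≤ g (j-2) := mono (j-2) (by omega) 0 (by omega)
    have h2 : g (j-2) < g (j-2+1) := step (j-2) (by omega)
    have : j - 2 + 1 = j - 1 := by omega
    rw [this] at h2
    exact lt_of_le_of_lt h1 h2
  -- g (j-1) equals C(n-1,j) * x^j
  have hc2 : (n-1).choose j * j = (n-1).choose (j-1) * ((n-1) - (j-1)) := by
    have := Nat.choose_succ_right_eq (n-1) (j-1)
    have hj1 : j - 1 + 1 = j := by omega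
    rwa [hj1] at this
  have heq : ((n-1).choose j : ℝ) * x ^ j = g (j-1) := by
    have hcx : ((n-1).choose j : ℝ) * x = ((n-1).choose (j-1) : ℝ) := by
      rw [hxdef, ← mul_div_assoc, div_eq_iff (ne_of_gt hnj)]
      have h := congrArg (Nat.cast : ℕ → ℝ) hc2
      push_cast [Nat.cast_sub (show j-1 ≤ n-1 by omega),
        Nat.cast_sub (show 1 ≤ n by omega), Nat.cast_sub (show 1 ≤ j by omega)] at h
      linarith
    have hjpow : x ^ j = x ^ (j-1) * x := by
      have h : j = (j-1) + 1 := by omega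
      conv_lhs => rw [h, pow_succ]
    rw [hjpow, hg]
    simp only
    rw [mul_comm (x ^ (j-1)) x, ← mul_assoc, hcx]
  -- final sum comparison
  rw [hQ]
  have hsum : ∑ k ∈ Finset.Icc 1 j, ((n - 1).choose (k - 1) : ℝ) * x ^ (k - 1)
      < ∑ _k ∈ Finset.Icc 1 j, g (j-1) := by
    apply Finset.sum_lt_sum
    · intro k hk
      rw [Finset.mem_Icc] at hk
      exact mono (j-1) (le_refl _) (k-1) (by omega)
    · refine ⟨1, Finset.mem_Icc.mpr ⟨le_refl _, by omega⟩, ?_⟩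
      simpa [hg] using gstrict
  have hcard : ∑ _k ∈ Finset.Icc 1 j, g (j-1) = (j:ℝ) * g (j-1) := by
    rw [Finset.sum_const, Nat.card_Icc]
    simp
  rw [hcard, ← heq] at hsum
  have : (j : ℝ) * (((n-1).choose j : ℝ) * x ^ j)
      = (j : ℝ) * ((n - 1).choose j : ℝ) * x ^ j := by ring
  rw [this] at hsum
  linarith
end

section
/- Let V > c > 0, set R = V/c ≥ 7 and j = ⌊R − √R⌋, n an integer with n > 2R, and p = (R − √(5·R·ln R))/(n−1) (assume p > 0). Then ∑_{k=j+1}^{n} C(n−1,k−1)·p^{k−1}·(1−p)^{n−k} ≤ √(1/R). -/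
open Finset Real
set_option maxHeartbeats 1000000


lemma logQuad {u : ℝ} (hu : 0 < u) (hu1 : u ≤ 1) :
    Real.log u ≤ u - 1 - (1 - u) ^ 2 / 2 := by
  set f : ℝ → ℝ := fun x => x - 1 - (1 - x) ^ 2 / 2 - Real.log x with hf
  have hderiv : ∀ x ∈ Set.Ioo u 1, HasDerivAt f (2 - x - x⁻¹) x := by
    intro x hx
    have hx0 : x ≠ 0 := ne_of_gt (lt_trans hu hx.1)
    have h1 : HasDerivAt f
        (1 - ((2:ℕ) * (1 - x) ^ 1 * (0 - 1)) / 2 - x⁻¹) x :=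
      (((hasDerivAt_id x).sub_const 1).sub
        ((((hasDerivAt_const x (1:ℝ)).sub (hasDerivAt_id x)).pow 2).div_const 2)).sub
        (Real.hasDerivAt_log hx0)
    convert h1 using 1
    push_cast; ring
  have hanti : AntitoneOn f (Set.Icc u 1) := by
    apply antitoneOn_of_deriv_nonpos (convex_Icc u 1)
    · apply ContinuousOn.sub
      · fun_prop
      · exact ContinuousOn.log continuousOn_id
          (fun x hx => ne_of_gt (lt_of_lt_of_le hu hx.1))
    · rw [interior_Icc]
      exact fun x hx => (hderiv x hx).differentiableAt.differentiableWithinAt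
    · rw [interior_Icc]
      intro x hx
      rw [(hderiv x hx).deriv]
      have hx0 : 0 < x := lt_trans hu hx.1
      have h2 : x * x⁻¹ = 1 := mul_inv_cancel₀ hx0.ne'
      nlinarith [sq_nonneg (x - 1)]
  have h := hanti (Set.mem_Icc.mpr ⟨le_refl u, hu1⟩)
    (Set.mem_Icc.mpr ⟨hu1, le_refl 1⟩) hu1
  simp only [hf, Real.log_one] at h
  linarith [h]

lemma keyExp {x y : ℝ} (hx : 0 < x) (hxy : x ≤ y) :
    y - x - y * Real.log (y / x) ≤ -(y - x) ^ 2 / (2 * y) := by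
  have hy : 0 < y := lt_of_lt_of_le hx hxy
  have hu : 0 < x / y := div_pos hx hy
  have hu1 : x / y ≤ 1 := (div_le_one hy).mpr hxy
  have h := logQuad hu hu1
  have hlog : Real.log (y / x) = -Real.log (x / y) := by
    rw [← Real.log_inv]; congr 1; field_simp
  rw [hlog]
  have h2 : y * Real.log (x / y) ≤ y * (x / y - 1 - (1 - x / y) ^ 2 / 2) :=
    mul_le_mul_of_nonneg_left h hy.le
  have h3 : y * (x / y - 1 - (1 - x / y) ^ 2 / 2) = x - y - (y - x) ^ 2 / (2 * y) := by
    field_simp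
  have h4 : -(y - x) ^ 2 / (2 * y) = -((y - x) ^ 2 / (2 * y)) := by ring
  rw [h4]
  linarith [h2, h3.symm ▸ h2]



theorem chernoff_tail_bound (V c : ℝ) (hc : 0 < c) (hcV : c < V)
    (R : ℝ) (hR : R = V / c) (hR7 : 7 ≤ R)
    (j : ℕ) (hj : j = ⌊R - Real.sqrt R⌋₊)
    (n : ℕ) (hn : 2 * R < n)
    (p : ℝ) (hp : p = (R - Real.sqrt (5 * R * Real.log R)) / ((n : ℝ) - 1))
    (hp0 : 0 < p) :
    ∑ k ∈ Finset.Icc (j + 1) n,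
        ((n - 1).choose (k - 1) : ℝ) * p ^ (k - 1) * (1 - p) ^ (n - k)
      ≤ Real.sqrt (1 / R) := by
  have hR0 : (0:ℝ) < R := by linarith
  set L := Real.log R with hLdef
  set s := Real.sqrt (5 * R * Real.log R) with hsdef
  have hn15 : 15 ≤ n := by
    have h14 : (14:ℝ) < (n:ℝ) := by nlinarith
    have : (14:ℕ) < n := by exact_mod_cast h14
    omega
  have hm : ((n - 1 : ℕ) : ℝ) = (n:ℝ) - 1 := by
    have h1 : 1 ≤ n := by omega
    push_cast [h1]; ring
  have hn1 : (0:ℝ) < (n:ℝ) - 1 := by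
    have : (15:ℝ) ≤ (n:ℝ) := by exact_mod_cast hn15
    linarith
  set μ : ℝ := ((n:ℝ) - 1) * p with hμdef
  have hμpos : 0 < μ := mul_pos hn1 hp0
  have hμeq : μ = R - s := by
    rw [hμdef, hp]; field_simp
  -- log lower bound
  have hL138 : (1.386:ℝ) ≤ L := by
    have h4 : Real.log 4 ≤ L := Real.log_le_log (by norm_num) (by linarith)
    have hlog4 : Real.log 4 = 2 * Real.log 2 := by
      rw [show (4:ℝ) = 2 ^ 2 by norm_num, Real.log_pow]; push_cast; ring
    have := Real.log_two_gt_d9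
    linarith
  have hL0 : 0 < L := by linarith
  -- sqrt facts
  have ht : Real.sqrt R * Real.sqrt R = R := Real.mul_self_sqrt hR0.le
  have ht0 : (0:ℝ) ≤ Real.sqrt R := Real.sqrt_nonneg R
  have ht264 : (2.64:ℝ) ≤ Real.sqrt R := by nlinarith
  have hw : Real.sqrt L * Real.sqrt L = L := Real.mul_self_sqrt hL0.le
  have hw0 : (0:ℝ) ≤ Real.sqrt L := Real.sqrt_nonneg L
  have hw117 : (1.17:ℝ) ≤ Real.sqrt L := by nlinarith
  have ha : Real.sqrt 5 * Real.sqrt 5 = 5 := Real.mul_self_sqrt (by norm_num)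
  have ha0 : (0:ℝ) ≤ Real.sqrt 5 := Real.sqrt_nonneg 5
  have ha223 : (2.23:ℝ) ≤ Real.sqrt 5 := by nlinarith
  have hs_eq : s = Real.sqrt R * (Real.sqrt 5 * Real.sqrt L) := by
    rw [hsdef, show 5 * R * Real.log R = R * (5 * Real.log R) by ring,
      Real.sqrt_mul hR0.le, Real.sqrt_mul (by norm_num : (0:ℝ) ≤ 5)]
  -- j bounds
  have hRs : (0:ℝ) ≤ R - Real.sqrt R := by nlinarith
  have hjhi : (j:ℝ) ≤ R - Real.sqrt R := by
    rw [hj]; exact Nat.floor_le hRs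
  have hjlo : R - Real.sqrt R - 1 < (j:ℝ) := by
    have := Nat.lt_floor_add_one (R - Real.sqrt R)
    rw [hj]; push_cast; linarith
  -- key numeric inequality : sqrt R * sqrt L ≤ s - sqrt R - 1
  have hkey : Real.sqrt R * Real.sqrt L ≤ s - Real.sqrt R - 1 := by
    rw [hs_eq]
    have h1 : (1.23:ℝ) ≤ Real.sqrt 5 - 1 := by linarith
    have h2 : (1.17:ℝ) * 1.23 ≤ Real.sqrt L * (Real.sqrt 5 - 1) :=
      mul_le_mul hw117 h1 (by norm_num) (by linarith)
    have h3 : (0.4:ℝ) ≤ Real.sqrt L * (Real.sqrt 5 - 1) - 1 := by linarith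
    have h4 : (2.64:ℝ) * 0.4 ≤ Real.sqrt R * (Real.sqrt L * (Real.sqrt 5 - 1) - 1) :=
      mul_le_mul ht264 h3 (by norm_num) (by linarith)
    have h5 : Real.sqrt R * (Real.sqrt L * (Real.sqrt 5 - 1) - 1)
        = Real.sqrt R * (Real.sqrt 5 * Real.sqrt L) - Real.sqrt R * Real.sqrt L
          - Real.sqrt R := by ring
    linarith [h4, h5]
  have hjμ : Real.sqrt R * Real.sqrt L < (j:ℝ) - μ := by
    rw [hμeq]; linarith
  have hμj : μ < (j:ℝ) := by linarith [mul_nonneg ht0 hw0]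
  have hj0 : 0 < (j:ℝ) := lt_trans hμpos hμj
  -- (j - μ)^2 ≥ j * L
  have hsq : (j:ℝ) * L ≤ ((j:ℝ) - μ) ^ 2 := by
    have h1 : (Real.sqrt R * Real.sqrt L) ^ 2 ≤ ((j:ℝ) - μ) ^ 2 := by
      apply pow_le_pow_left₀ (mul_nonneg ht0 hw0) hjμ.le
    have h2 : (Real.sqrt R * Real.sqrt L) ^ 2 = R * L := by
      rw [mul_pow, sq, sq, ht, hw]
    nlinarith
  -- exponent bound
  have hF : (j:ℝ) - μ - (j:ℝ) * Real.log ((j:ℝ) / μ) ≤ -(L / 2) := by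
    have h := keyExp hμpos hμj.le
    have h2 : L / 2 ≤ ((j:ℝ) - μ) ^ 2 / (2 * (j:ℝ)) := by
      rw [div_le_div_iff₀ (by norm_num) (by positivity)]
      nlinarith
    have h3 : -((j:ℝ) - μ) ^ 2 / (2 * (j:ℝ)) = -(((j:ℝ) - μ) ^ 2 / (2 * (j:ℝ))) := by
      ring
    linarith [h3 ▸ h]
  -- p < 1
  have hs0 : (0:ℝ) ≤ s := Real.sqrt_nonneg _
  have hp1 : p < 1 := by
    have hμR : μ ≤ R := by rw [hμeq]; linarith
    have h : ((n:ℝ) - 1) * p < ((n:ℝ) - 1) * 1 := by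
      rw [mul_one, ← hμdef]; linarith
    exact lt_of_mul_lt_mul_left h hn1.le
  set q : ℝ := 1 - p with hqdef
  have hq0 : (0:ℝ) ≤ q := by rw [hqdef]; linarith
  set E : ℝ := (j:ℝ) / μ with hEdef
  have hE1 : 1 < E := (one_lt_div hμpos).mpr hμj
  have hE0 : 0 < E := by linarith
  set m := n - 1 with hmdef
  -- reindex the sum
  have hIcc : Finset.Icc (j+1) n = (Finset.Icc j m).map (addRightEmbedding 1) := by
    rw [Finset.map_add_right_Icc]
    congr 1
    omega
  have hre : ∑ k ∈ Finset.Icc (j+1) n, ((m.choose (k-1)):ℝ) * p ^ (k-1) * q ^ (n-k)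
      = ∑ i ∈ Finset.Icc j m, ((m.choose i):ℝ) * p ^ i * q ^ (m-i) := by
    rw [hIcc, Finset.sum_map]
    apply Finset.sum_congr rfl
    intro i hi
    have e1 : addRightEmbedding 1 i = i + 1 := rfl
    rw [e1]
    have e2 : i + 1 - 1 = i := by omega
    have e3 : n - (i+1) = m - i := by omega
    rw [e2, e3]
  rw [hre]
  -- Chernoff chain
  have hchain : ∑ i ∈ Finset.Icc j m, ((m.choose i):ℝ) * p ^ i * q ^ (m-i)
      ≤ Real.exp ((j:ℝ) - μ) / E ^ j := by
    have hterm : ∀ i ∈ Finset.Icc j m,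
        ((m.choose i):ℝ) * p ^ i * q ^ (m-i)
          ≤ ((m.choose i):ℝ) * (p*E) ^ i * q ^ (m-i) / E ^ j := by
      intro i hi
      rw [le_div_iff₀ (pow_pos hE0 j), mul_pow]
      have hEji : E ^ j ≤ E ^ i := pow_le_pow_right₀ hE1.le (Finset.mem_Icc.mp hi).1
      have hnn : (0:ℝ) ≤ ((m.choose i):ℝ) * q ^ (m-i) * p ^ i := by positivity
      calc ((m.choose i):ℝ) * p ^ i * q ^ (m-i) * E ^ j
          = (((m.choose i):ℝ) * q ^ (m-i) * p ^ i) * E ^ j := by ring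
        _ ≤ (((m.choose i):ℝ) * q ^ (m-i) * p ^ i) * E ^ i :=
            mul_le_mul_of_nonneg_left hEji hnn
        _ = ((m.choose i):ℝ) * (p ^ i * E ^ i) * q ^ (m-i) := by ring
    have hsub : Finset.Icc j m ⊆ Finset.range (m+1) := by
      intro x hx
      have := (Finset.mem_Icc.mp hx).2
      simp only [Finset.mem_range]
      omega
    have hmono : ∑ i ∈ Finset.Icc j m, ((m.choose i):ℝ) * (p*E) ^ i * q ^ (m-i)
        ≤ ∑ i ∈ Finset.range (m+1), ((m.choose i):ℝ) * (p*E) ^ i * q ^ (m-i) :=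
      Finset.sum_le_sum_of_subset_of_nonneg hsub (fun i _ _ => by positivity)
    have hbin : ∑ i ∈ Finset.range (m+1), ((m.choose i):ℝ) * (p*E) ^ i * q ^ (m-i)
        = (p*E + q) ^ m := by
      rw [add_pow]
      apply Finset.sum_congr rfl
      intro i hi
      ring
    have hexp1 : (p*E + q) ^ m ≤ Real.exp ((j:ℝ) - μ) := by
      have hb : p*E + q ≤ Real.exp (p*(E-1)) := by
        have := Real.add_one_le_exp (p*(E-1))
        rw [hqdef]; linarith
      have hb0 : (0:ℝ) ≤ p*E + q := by positivity
      have h2 : (p*E + q) ^ m ≤ Real.exp (p*(E-1)) ^ m := pow_le_pow_left₀ hb0 hb m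
      have h3 : Real.exp (p*(E-1)) ^ m = Real.exp ((j:ℝ) - μ) := by
        rw [← Real.exp_nat_mul]
        congr 1
        rw [hm, hEdef]
        have hne : μ ≠ 0 := hμpos.ne'
        field_simp [hμdef]
        ring
      rw [← h3]; exact h2
    calc ∑ i ∈ Finset.Icc j m, ((m.choose i):ℝ) * p ^ i * q ^ (m-i)
        ≤ ∑ i ∈ Finset.Icc j m, ((m.choose i):ℝ) * (p*E) ^ i * q ^ (m-i) / E ^ j :=
          Finset.sum_le_sum hterm
      _ = (∑ i ∈ Finset.Icc j m, ((m.choose i):ℝ) * (p*E) ^ i * q ^ (m-i)) / E ^ j := by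
          rw [Finset.sum_div]
      _ ≤ (p*E + q) ^ m / E ^ j := by
          rw [← hbin]
          exact div_le_div_of_nonneg_right hmono (pow_pos hE0 j).le
      _ ≤ Real.exp ((j:ℝ) - μ) / E ^ j :=
          div_le_div_of_nonneg_right hexp1 (pow_pos hE0 j).le
  have hEj : E ^ j = Real.exp ((j:ℝ) * Real.log E) := by
    calc E ^ j = Real.exp (Real.log E) ^ j := by rw [Real.exp_log hE0]
      _ = Real.exp ((j:ℝ) * Real.log E) := (Real.exp_nat_mul _ j).symm
  have hfinal : Real.exp ((j:ℝ) - μ) / E ^ j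
      = Real.exp ((j:ℝ) - μ - (j:ℝ) * Real.log E) := by
    rw [hEj, ← Real.exp_sub]
  have hR12 : Real.sqrt (1/R) = Real.exp (-(L/2)) := by
    have h1 : Real.exp (-(L/2)) ^ 2 = 1/R := by
      have h2 : ((2:ℕ):ℝ) * (-(L/2)) = -L := by push_cast; ring
      rw [← Real.exp_nat_mul, h2, hLdef, Real.exp_neg, Real.exp_log hR0, one_div]
    rw [← h1, Real.sqrt_sq (Real.exp_pos _).le]
  calc ∑ i ∈ Finset.Icc j m, ((m.choose i):ℝ) * p ^ i * q ^ (m-i)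
      ≤ Real.exp ((j:ℝ) - μ) / E ^ j := hchain
    _ = Real.exp ((j:ℝ) - μ - (j:ℝ) * Real.log E) := hfinal
    _ ≤ Real.exp (-(L/2)) := Real.exp_le_exp.mpr hF
    _ = Real.sqrt (1/R) := hR12.symm
end

section
/- Let n ≥ 2, p ∈ (0,1), and let j* maximize over j ∈ {1,…,n} the quantity y_j = (1/j)·∑_{k=1}^{j} C(n−1,k−1)·p^{k−1}·(1−p)^{n−k}. If j* ≤ n/2 then j* > p(n−1) + (1/2)·√(p(n−1)·max{0, ln(p(n−1)/16)}). -/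
open Finset Real

/-- Shift a sum over `Icc 1 n` to a sum over `range n`. -/
lemma sum_Icc_one_eq_sum_range (f : ℕ → ℝ) (n : ℕ) :
    ∑ k ∈ Finset.Icc 1 n, f k = ∑ i ∈ Finset.range n, f (i + 1) := by
  induction n with
  | zero => simp
  | succ n ih =>
      rw [Finset.sum_Icc_succ_top (Nat.le_add_left 1 n) f, Finset.sum_range_succ, ih]

/-- Lower Stirling bound. -/
lemma stirling_lower (k : ℕ) (hk : k ≠ 0) :
    Real.sqrt π * (Real.sqrt (2 * (k:ℝ)) * ((k : ℝ) / Real.exp 1) ^ k) ≤ (k.factorial : ℝ) := by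
  obtain ⟨m, rfl⟩ := Nat.exists_eq_succ_of_ne_zero hk
  have h : Real.sqrt π ≤ Stirling.stirlingSeq (m+1) := by
    have := Antitone.le_of_tendsto Stirling.stirlingSeq'_antitone
      (Stirling.tendsto_stirlingSeq_sqrt_pi.comp (Filter.tendsto_add_atTop_nat 1)) m
    simpa [Function.comp, Nat.succ_eq_add_one] using this
  have hpos : (0:ℝ) < Real.sqrt (2 * ((m+1:ℕ):ℝ)) * (((m+1:ℕ):ℝ) / Real.exp 1) ^ (m+1) := by
    have : (0:ℝ) < ((m+1:ℕ):ℝ) := by positivity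
    positivity
  rw [Stirling.stirlingSeq, le_div_iff₀ hpos] at h
  exact h

/-- Upper Stirling bound. -/
lemma stirling_upper (k : ℕ) (hk : k ≠ 0) :
    (k.factorial : ℝ) ≤ (Real.exp 1 / Real.sqrt 2) *
      (Real.sqrt (2 * (k:ℝ)) * ((k : ℝ) / Real.exp 1) ^ k) := by
  obtain ⟨m, rfl⟩ := Nat.exists_eq_succ_of_ne_zero hk
  have h : Stirling.stirlingSeq (m+1) ≤ Real.exp 1 / Real.sqrt 2 := by
    have := Stirling.stirlingSeq'_antitone (Nat.zero_le m)
    simpa [Function.comp, Stirling.stirlingSeq_one] using this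
  have hpos : (0:ℝ) < Real.sqrt (2 * ((m+1:ℕ):ℝ)) * (((m+1:ℕ):ℝ) / Real.exp 1) ^ (m+1) := by
    have : (0:ℝ) < ((m+1:ℕ):ℝ) := by positivity
    positivity
  rw [Stirling.stirlingSeq, div_le_iff₀ hpos] at h
  exact h

/-- Lower bound on binomial pmf in terms of the entropy term. -/
lemma pmf_lower (N j b : ℕ) (hN : N = j + b) (hj : 1 ≤ j) (hb : 1 ≤ b)
    (p : ℝ) (hp0 : 0 < p) (hp1 : p < 1) :
    (3/10) / Real.sqrt j * ((p * N / j) ^ j * ((1 - p) * N / b) ^ b) ≤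
      (N.choose j : ℝ) * p ^ j * (1 - p) ^ b := by
  have hq : (0:ℝ) < 1 - p := by linarith
  have hjR : (0:ℝ) < j := by exact_mod_cast hj
  have hbR : (0:ℝ) < b := by exact_mod_cast hb
  have hNR : (N:ℝ) = (j:ℝ) + b := by exact_mod_cast hN
  have hNpos : (0:ℝ) < N := by rw [hNR]; linarith
  have he : (0:ℝ) < Real.exp 1 := Real.exp_pos 1
  have hpi : (1.77:ℝ) ≤ Real.sqrt π := by
    rw [Real.le_sqrt (by norm_num) Real.pi_pos.le]
    nlinarith [Real.pi_gt_d6]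
  have hs2 : (1.41:ℝ) ≤ Real.sqrt 2 := by
    rw [Real.le_sqrt (by norm_num) (by norm_num)]
    norm_num
  have hee : Real.exp 1 ≤ 2.7182818286 := le_of_lt Real.exp_one_lt_d9
  have he2 : Real.exp 1 ^ 2 ≤ 7.389057 := by nlinarith [he.le, hee]
  have h22 : Real.sqrt 2 * Real.sqrt 2 = 2 := Real.mul_self_sqrt (by norm_num)
  have hNf := stirling_lower N (by omega)
  have hjf := stirling_upper j (by omega)
  have hbf := stirling_upper b (by omega)
  set e := Real.exp 1 with hedef
  set Sj := Real.sqrt (2 * (j:ℝ)) with hSj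
  set Sb := Real.sqrt (2 * (b:ℝ)) with hSb
  set SN := Real.sqrt (2 * (N:ℝ)) with hSN
  have hSjpos : 0 < Sj := Real.sqrt_pos.mpr (by linarith)
  have hSbpos : 0 < Sb := Real.sqrt_pos.mpr (by linarith)
  have hSNpos : 0 < SN := Real.sqrt_pos.mpr (by linarith)
  have h2 : (0:ℝ) < Real.sqrt 2 := by positivity
  have hDj : (0:ℝ) < ((j:ℝ)/e)^j := pow_pos (by positivity) j
  have hDb : (0:ℝ) < ((b:ℝ)/e)^b := pow_pos (by positivity) b
  -- choose as factorial ratio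
  have hjN : j ≤ N := by omega
  have hfac : (N.choose j : ℝ) = (N.factorial : ℝ) / ((j.factorial : ℝ) * (b.factorial : ℝ)) := by
    rw [eq_div_iff (by positivity)]
    have h := Nat.choose_mul_factorial_mul_factorial hjN
    have hb' : N - j = b := by omega
    rw [hb'] at h
    push_cast [← h]
    ring
  set Bd := (e/Real.sqrt 2 * (Sj * ((j:ℝ)/e)^j)) * (e/Real.sqrt 2 * (Sb * ((b:ℝ)/e)^b)) with hBd
  have hBdpos : 0 < Bd := by positivity
  have hchoose : Real.sqrt π * (SN * ((N:ℝ)/e)^N) / Bd ≤ (N.choose j : ℝ) := by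
    rw [hfac]
    refine div_le_div₀ (by positivity) hNf (by positivity) ?_
    calc (j.factorial : ℝ) * (b.factorial : ℝ)
        ≤ (e/Real.sqrt 2 * (Sj * ((j:ℝ)/e)^j)) * (e/Real.sqrt 2 * (Sb * ((b:ℝ)/e)^b)) :=
          mul_le_mul hjf hbf (by positivity) (by positivity)
      _ = Bd := hBd.symm
  -- pow identities
  have hNj : ((N:ℝ)/e)^j * p^j = ((j:ℝ)/e)^j * (p*N/j)^j := by
    rw [← mul_pow, ← mul_pow]; congr 1; field_simp; try ring
  have hNb : ((N:ℝ)/e)^b * (1-p)^b = ((b:ℝ)/e)^b * ((1-p)*N/b)^b := by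
    rw [← mul_pow, ← mul_pow]; congr 1; field_simp; try ring
  set E := (p*(N:ℝ)/j)^j * ((1-p)*(N:ℝ)/b)^b with hEdef
  have hE : ((N:ℝ)/e)^N * (p^j*(1-p)^b) = (((j:ℝ)/e)^j * ((b:ℝ)/e)^b) * E := by
    have hsplit : ((N:ℝ)/e)^N = ((N:ℝ)/e)^j * ((N:ℝ)/e)^b := by rw [hN, pow_add]
    calc ((N:ℝ)/e)^N * (p^j*(1-p)^b)
        = (((N:ℝ)/e)^j * p^j) * (((N:ℝ)/e)^b * (1-p)^b) := by rw [hsplit]; ring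
      _ = _ := by rw [hNj, hNb]; ring
  have hEpos : 0 < E := by
    rw [hEdef]
    exact mul_pos (pow_pos (by positivity) j) (pow_pos (div_pos (mul_pos hq hNpos) hbR) b)
  have step2 : Real.sqrt π * (SN * ((N:ℝ)/e)^N) / Bd * (p^j*(1-p)^b)
      = Real.sqrt π * SN / ((e/Real.sqrt 2)^2 * (Sj * Sb)) * E := by
    rw [div_mul_eq_mul_div]
    rw [show Real.sqrt π * (SN * ((N:ℝ)/e)^N) * (p^j*(1-p)^b)
        = Real.sqrt π * SN * (((N:ℝ)/e)^N * (p^j*(1-p)^b)) from by ring, hE, hBd]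
    field_simp
  clear_value e Sj Sb SN Bd E
  have hsjpos : (0:ℝ) < Real.sqrt (j:ℝ) := Real.sqrt_pos.mpr hjR
  have hsbpos : (0:ℝ) < Real.sqrt (b:ℝ) := Real.sqrt_pos.mpr hbR
  have c1 : (3/10) / Real.sqrt j ≤ Real.sqrt π * SN / ((e/Real.sqrt 2)^2 * (Sj * Sb)) := by
    have hsNb : Real.sqrt (b:ℝ) ≤ Real.sqrt (N:ℝ) := Real.sqrt_le_sqrt (by linarith)
    have hden : ((e/Real.sqrt 2)^2 * (Sj * Sb)) = e^2 * (Real.sqrt (j:ℝ) * Real.sqrt (b:ℝ)) := by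
      rw [hSj, hSb, Real.sqrt_mul (by norm_num : (0:ℝ) ≤ 2), Real.sqrt_mul (by norm_num : (0:ℝ) ≤ 2),
        div_pow]
      field_simp
    have hSN2 : SN = Real.sqrt 2 * Real.sqrt (N:ℝ) := by
      rw [hSN, Real.sqrt_mul (by norm_num : (0:ℝ) ≤ 2)]
    have hc : (3/10:ℝ)*e^2 ≤ Real.sqrt π * Real.sqrt 2 := by
      have hps : (1.77:ℝ) * 1.41 ≤ Real.sqrt π * Real.sqrt 2 :=
        mul_le_mul hpi hs2 (by norm_num) ((by norm_num : (0:ℝ) ≤ 1.77).trans hpi)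
      linarith
    rw [hden, hSN2, div_le_div_iff₀ hsjpos (by positivity)]
    calc (3:ℝ)/10 * (e^2 * (Real.sqrt (j:ℝ) * Real.sqrt (b:ℝ)))
        = ((3/10:ℝ)*e^2) * (Real.sqrt (j:ℝ) * Real.sqrt (b:ℝ)) := by ring
      _ ≤ (Real.sqrt π * Real.sqrt 2) * (Real.sqrt (j:ℝ) * Real.sqrt (b:ℝ)) :=
          mul_le_mul_of_nonneg_right hc (by positivity)
      _ ≤ (Real.sqrt π * Real.sqrt 2) * (Real.sqrt (j:ℝ) * Real.sqrt (N:ℝ)) := by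
          apply mul_le_mul_of_nonneg_left _ (by positivity)
          exact mul_le_mul_of_nonneg_left hsNb hsjpos.le
      _ = Real.sqrt π * (Real.sqrt 2 * Real.sqrt (N:ℝ)) * Real.sqrt (j:ℝ) := by ring
  calc (3/10) / Real.sqrt (j:ℝ) * E
      ≤ Real.sqrt π * SN / ((e/Real.sqrt 2)^2 * (Sj * Sb)) * E :=
        mul_le_mul_of_nonneg_right c1 hEpos.le
    _ = Real.sqrt π * (SN * ((N:ℝ)/e)^N) / Bd * (p^j*(1-p)^b) := step2.symm
    _ ≤ (N.choose j : ℝ) * (p^j*(1-p)^b) :=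
        mul_le_mul_of_nonneg_right hchoose (by positivity)
    _ = (N.choose j : ℝ) * p ^ j * (1 - p) ^ b := by ring

/-- KL bound. -/
lemma E_lower (N j b : ℕ) (hN : N = j + b) (hj : 1 ≤ j) (hb : 1 ≤ b)
    (p : ℝ) (hp0 : 0 < p) (hp12 : p ≤ 1/2) :
    Real.exp (-(2 * ((j:ℝ) - p * N)^2 / (p * N))) ≤
      (p * N / j) ^ j * ((1 - p) * N / b) ^ b := by
  have hp1 : (0:ℝ) < 1 - p := by linarith
  have hjR : (0:ℝ) < j := by exact_mod_cast hj
  have hbR : (0:ℝ) < b := by exact_mod_cast hb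
  have hNR : (N:ℝ) = (j:ℝ) + b := by exact_mod_cast hN
  have hNpos : (0:ℝ) < N := by rw [hNR]; linarith
  have h1pos : (0:ℝ) < p * N / j := by positivity
  have h2pos : (0:ℝ) < (1 - p) * N / b := div_pos (mul_pos hp1 hNpos) hbR
  have hRpos : (0:ℝ) < (p * N / j) ^ j * ((1 - p) * N / b) ^ b :=
    mul_pos (pow_pos h1pos j) (pow_pos h2pos b)
  rw [← Real.exp_log hRpos]
  apply Real.exp_le_exp.mpr
  rw [Real.log_mul (by positivity) (ne_of_gt (pow_pos h2pos b)), Real.log_pow, Real.log_pow]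
  have l1 : Real.log ((j:ℝ) / (p * N)) ≤ (j:ℝ) / (p * N) - 1 :=
    Real.log_le_sub_one_of_pos (by positivity)
  have l2 : Real.log ((b:ℝ) / ((1 - p) * N)) ≤ (b:ℝ) / ((1 - p) * N) - 1 :=
    Real.log_le_sub_one_of_pos (div_pos hbR (mul_pos hp1 hNpos))
  have e1 : Real.log (p * N / j) = - Real.log ((j:ℝ) / (p * N)) := by
    rw [← Real.log_inv]; congr 1; field_simp
  have e2 : Real.log ((1 - p) * N / b) = - Real.log ((b:ℝ) / ((1 - p) * N)) := by
    rw [← Real.log_inv]; congr 1; field_simp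
  rw [e1, e2]
  have hpne : p ≠ 0 := ne_of_gt hp0
  have hqne : (1:ℝ) - p ≠ 0 := ne_of_gt hp1
  have hstne : (j:ℝ) + b ≠ 0 := by positivity
  have hid : ((j:ℝ) * -((j:ℝ) / (p * ((j:ℝ)+b)) - 1) + (b:ℝ) * -((b:ℝ) / ((1 - p) * ((j:ℝ)+b)) - 1))
      - (-(2 * ((j:ℝ) - p * ((j:ℝ)+b))^2 / (p * ((j:ℝ)+b))))
      = ((j:ℝ) - p * ((j:ℝ)+b))^2 * (1 - 2*p) / (p * (1 - p) * ((j:ℝ)+b)) := by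
    field_simp
    ring
  have hnn : (0:ℝ) ≤ ((j:ℝ) - p * ((j:ℝ)+b))^2 * (1 - 2*p) / (p * (1 - p) * ((j:ℝ)+b)) :=
    div_nonneg (mul_nonneg (sq_nonneg _) (by linarith))
      (le_of_lt (mul_pos (mul_pos hp0 hp1) (by positivity)))
  have key : -(2 * ((j:ℝ) - p * N)^2 / (p * N)) ≤
      (j:ℝ) * -((j:ℝ) / (p * N) - 1) + (b:ℝ) * -((b:ℝ) / ((1 - p) * N) - 1) := by
    rw [hNR]; linarith [hid, hnn]
  calc -(2 * ((j:ℝ) - p * N)^2 / (p * N))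
      ≤ (j:ℝ) * -((j:ℝ) / (p * N) - 1) + (b:ℝ) * -((b:ℝ) / ((1 - p) * N) - 1) := key
    _ ≤ (j:ℝ) * -Real.log ((j:ℝ) / (p * N)) + (b:ℝ) * -Real.log ((b:ℝ) / ((1 - p) * N)) := by
        have m1 := mul_le_mul_of_nonneg_left (neg_le_neg l1) hjR.le
        have m2 := mul_le_mul_of_nonneg_left (neg_le_neg l2) hbR.le
        linarith

set_option maxHeartbeats 1000000 in
theorem optimal_prize_count_lower_bound (n : ℕ) (hn : 2 ≤ n)
    (p : ℝ) (hp : p ∈ Set.Ioo (0 : ℝ) 1)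
    (y : ℕ → ℝ)
    (hy : ∀ j : ℕ, y j = (1 / (j : ℝ)) * ∑ k ∈ Finset.Icc 1 j,
      ((n - 1).choose (k - 1) : ℝ) * p ^ (k - 1) * (1 - p) ^ (n - k))
    (jstar : ℕ) (hmem : jstar ∈ Finset.Icc 1 n)
    (hmax : ∀ j ∈ Finset.Icc 1 n, y j ≤ y jstar)
    (hhalf : (jstar : ℝ) ≤ n / 2) :
    (jstar : ℝ) > p * ((n : ℝ) - 1) +
      (1/2) * Real.sqrt (p * ((n : ℝ) - 1) *
        max 0 (Real.log (p * ((n : ℝ) - 1) / 16))) := by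
  obtain ⟨hp0, hp1⟩ := hp
  rw [Finset.mem_Icc] at hmem
  obtain ⟨hj1, hjn⟩ := hmem
  have hq0 : (0:ℝ) < 1 - p := by linarith
  have hnR : (2:ℝ) ≤ (n:ℝ) := by exact_mod_cast hn
  set x : ℕ → ℝ := fun k => ((n - 1).choose (k - 1) : ℝ) * p ^ (k - 1) * (1 - p) ^ (n - k) with hxdef
  clear_value x
  have hxpos : ∀ k, 1 ≤ k → k ≤ n → 0 < x k := by
    intro k hk1 hkn
    have hc : 0 < (n-1).choose (k-1) := Nat.choose_pos (by omega)
    have h1 : (0:ℝ) < ((n-1).choose (k-1) : ℝ) := by exact_mod_cast hc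
    simp only [hxdef]
    positivity
  -- the x k sum to 1 over k = 1..n
  have hsum1 : ∑ k ∈ Finset.Icc 1 n, x k = 1 := by
    rw [sum_Icc_one_eq_sum_range]
    have hcg : ∀ i ∈ Finset.range n, x (i+1) = p^i * (1-p)^(n-1-i) * ((n-1).choose i : ℝ) := by
      intro i _
      simp only [hxdef, Nat.add_sub_cancel]
      rw [show n - (i+1) = n - 1 - i from by omega]
      ring
    rw [Finset.sum_congr rfl hcg]
    have hap := add_pow p (1-p) (n-1)
    rw [show n-1+1 = n from by omega, show p + (1-p) = 1 from by ring, one_pow] at hap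
    exact hap.symm
  have hSle : ∀ j, j ≤ n → ∑ k ∈ Finset.Icc 1 j, x k ≤ 1 := by
    intro j hj
    rw [← hsum1]
    apply Finset.sum_le_sum_of_subset_of_nonneg (Finset.Icc_subset_Icc_right hj)
    intro k hk _
    rw [Finset.mem_Icc] at hk
    exact (hxpos k hk.1 hk.2).le
  -- single step monotonicity
  have hstep : ∀ k : ℕ, 1 ≤ k → (k:ℝ) < p * n → x k < x (k+1) := by
    intro k hk1 hkpn
    have hkn : k ≤ n - 1 := by
      have h1 : (k:ℝ) < (n:ℝ) := by nlinarith
      have h2 : k < n := by exact_mod_cast h1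
      omega
    obtain ⟨i, rfl⟩ : ∃ i, k = i + 1 := ⟨k - 1, by omega⟩
    simp only [hxdef, Nat.add_sub_cancel]
    rw [show n - (i+1) = (n - (i+1+1)) + 1 from by omega, pow_succ, pow_succ]
    have hcc : ((n-1).choose (i+1) : ℝ) * ((i:ℝ)+1) = ((n-1).choose i : ℝ) * (((n-1) - i : ℕ) : ℝ) := by
      exact_mod_cast Nat.choose_succ_right_eq (n-1) i
    have hCpos : (0:ℝ) < ((n-1).choose i : ℝ) := by
      have := Nat.choose_pos (show i ≤ n-1 by omega)
      exact_mod_cast this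
    have hcast : (((n-1) - i : ℕ) : ℝ) = (n:ℝ) - 1 - i := by
      rw [Nat.cast_sub (by omega : i ≤ n - 1), Nat.cast_sub (by omega : 1 ≤ n)]
      norm_num
    rw [hcast] at hcc
    have hipn : (i:ℝ) + 1 < p * n := by push_cast at hkpn; linarith
    have hkey : ((n-1).choose i : ℝ) * (1-p) < ((n-1).choose (i+1) : ℝ) * p := by
      have hi1 : (0:ℝ) < (i:ℝ) + 1 := by positivity
      rw [← mul_lt_mul_iff_left₀ hi1]
      calc ((n-1).choose i : ℝ) * (1-p) * ((i:ℝ)+1)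
          < ((n-1).choose i : ℝ) * (p * ((n:ℝ) - 1 - i)) := by nlinarith
        _ = ((n-1).choose (i+1) : ℝ) * p * ((i:ℝ)+1) := by
            rw [show ((n-1).choose i : ℝ) * (p * ((n:ℝ)-1-i)) = (((n-1).choose i : ℝ) * ((n:ℝ)-1-i)) * p from by ring, ← hcc]
            ring
    have hppos : (0:ℝ) < p^i * (1-p)^(n - (i+1+1)) := by positivity
    nlinarith [mul_lt_mul_of_pos_right hkey hppos]
  -- chain monotonicity
  have hchain : ∀ b a : ℕ, 1 ≤ a → a < b → (b:ℝ) < p * n + 1 → x a < x b := by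
    intro b
    induction b with
    | zero => intro a h1 h2 _; omega
    | succ m ih =>
      intro a h1 h2 h3
      push_cast at h3
      rcases eq_or_lt_of_le (Nat.lt_succ_iff.mp h2) with heq | hlt
      · subst heq
        exact hstep a h1 (by linarith)
      · have hm1 : 1 ≤ m := by omega
        have hxm : x a < x m := ih a h1 hlt (by linarith)
        have hx2 : x m < x (m+1) := hstep m hm1 (by linarith)
        linarith
  -- Step 1 : p * n ≤ jstar
  have hjpn : p * n ≤ (jstar:ℝ) := by
    by_contra hcon
    push_neg at hcon
    have hj1n : jstar + 1 ≤ n := by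
      have h1 : (jstar:ℝ) < (n:ℝ) := by nlinarith
      have h2 : jstar < n := by exact_mod_cast h1
      omega
    have hjq : (0:ℝ) < (jstar:ℝ) := by exact_mod_cast hj1
    have hSlt : ∑ k ∈ Finset.Icc 1 jstar, x k < (jstar:ℝ) * x (jstar+1) := by
      calc ∑ k ∈ Finset.Icc 1 jstar, x k
          < ∑ _k ∈ Finset.Icc 1 jstar, x (jstar+1) := by
            apply Finset.sum_lt_sum_of_nonempty (Finset.nonempty_Icc.mpr hj1)
            intro k hk
            rw [Finset.mem_Icc] at hk
            exact hchain (jstar+1) k hk.1 (by omega) (by push_cast; linarith)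
        _ = (jstar:ℝ) * x (jstar+1) := by
            rw [Finset.sum_const, Nat.card_Icc, Nat.add_sub_cancel, nsmul_eq_mul]
    have hylt : y jstar < y (jstar+1) := by
      rw [hy jstar, hy (jstar+1), Finset.sum_Icc_succ_top (by omega : 1 ≤ jstar + 1)]
      push_cast
      rw [div_mul_eq_mul_div, div_mul_eq_mul_div, div_lt_div_iff₀ hjq (by linarith)]
      nlinarith [hSlt]
    have := hmax (jstar+1) (by rw [Finset.mem_Icc]; omega)
    linarith
  have hm : p * ((n:ℝ) - 1) < (jstar:ℝ) := by nlinarith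
  set m := p * ((n:ℝ) - 1) with hmdef
  clear_value m
  have hm0 : (0:ℝ) < m := by rw [hmdef]; nlinarith
  rcases le_or_gt m 16 with hle | hgt
  · -- small m case
    have hlog : Real.log (m/16) ≤ 0 := by
      apply Real.log_nonpos
      · linarith
      · linarith
    rw [max_eq_left hlog, mul_zero, Real.sqrt_zero, mul_zero, add_zero]
    exact hm
  · -- large m case
    set L := Real.log (m/16) with hLdef
    clear_value L
    have hL : 0 < L := by
      rw [hLdef]
      exact Real.log_pos (by rw [lt_div_iff₀ (by norm_num : (0:ℝ) < 16)]; linarith)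
    rw [max_eq_right hL.le]
    by_contra hcon
    push_neg at hcon
    have hnn : (0:ℝ) < (n:ℝ) := by linarith
    have hp12 : p ≤ 1/2 := by nlinarith [hjpn, hhalf]
    have hn18 : 18 ≤ n := by
      have h1 : (17:ℝ) < (n:ℝ) := by nlinarith
      have h2 : (17:ℕ) < n := by exact_mod_cast h1
      omega
    have hjm : m < (jstar:ℝ) := hm
    have hjq : (0:ℝ) < (jstar:ℝ) := by exact_mod_cast hj1
    have hjn2 : jstar ≤ n - 2 := by
      have h1 : (jstar:ℝ) ≤ (n:ℝ) - 2 := by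
        have : (18:ℝ) ≤ (n:ℝ) := by exact_mod_cast hn18
        linarith [hhalf]
      have h2 : (jstar:ℝ) ≤ (((n-2:ℕ)):ℝ) := by
        rw [Nat.cast_sub (by omega : 2 ≤ n)]
        push_cast
        linarith
      exact_mod_cast h2
    set b := n - 1 - jstar with hbdef
    have hb1 : 1 ≤ b := by omega
    have hbn : n - 1 = jstar + b := by omega
    have hncast : (((n-1:ℕ)):ℝ) = (n:ℝ) - 1 := by
      rw [Nat.cast_sub (by omega : 1 ≤ n)]
      norm_num
    -- upper bound : jstar * x (jstar+1) ≤ 1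
    have hyle := hmax (jstar+1) (by rw [Finset.mem_Icc]; omega)
    have hxub : (jstar:ℝ) * x (jstar+1) ≤ 1 := by
      rw [hy jstar, hy (jstar+1), Finset.sum_Icc_succ_top (by omega : 1 ≤ jstar + 1)] at hyle
      push_cast at hyle
      rw [div_mul_eq_mul_div, div_mul_eq_mul_div, div_le_div_iff₀ (by linarith) hjq] at hyle
      have hS1 : ∑ k ∈ Finset.Icc 1 jstar, x k ≤ 1 := hSle jstar hjn
      linarith [hyle, hS1]
    -- lower bound on x (jstar+1)
    have hxval : x (jstar+1) = ((n-1).choose jstar : ℝ) * p^jstar * (1-p)^b := by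
      simp only [hxdef, Nat.add_sub_cancel]
      rw [show n - (jstar+1) = b from by omega]
    have hlow := pmf_lower (n-1) jstar b hbn hj1 hb1 p hp0 hp1
    have hklo := E_lower (n-1) jstar b hbn hj1 hb1 p hp0 hp12
    rw [hncast] at hlow hklo
    -- exponential estimates
    have hsm : (0:ℝ) < Real.sqrt m := Real.sqrt_pos.mpr hm0
    have hsj : (0:ℝ) < Real.sqrt (jstar:ℝ) := Real.sqrt_pos.mpr hjq
    have hsq : ((jstar:ℝ) - m)^2 ≤ m*L/4 := by
      have h1 : (0:ℝ) ≤ (jstar:ℝ) - m := by linarith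
      have h2 : (jstar:ℝ) - m ≤ 1/2 * Real.sqrt (m*L) := by linarith [hcon]
      have h3 : (1/2 * Real.sqrt (m*L))^2 = m*L/4 := by
        rw [mul_pow, Real.sq_sqrt (by positivity)]
        ring
      nlinarith [h1, h2, h3]
    have hexp1 : Real.exp (-(L/2)) ≤ Real.exp (-(2*((jstar:ℝ) - m)^2/m)) := by
      apply Real.exp_le_exp.mpr
      rw [neg_le_neg_iff, div_le_div_iff₀ hm0 (by norm_num : (0:ℝ) < 2)]
      nlinarith [hsq]
    have hexpval : Real.exp (-(L/2)) = 4 / Real.sqrt m := by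
      have h1 : Real.exp (L/2) ^ 2 = m/16 := by
        rw [sq, ← Real.exp_add, show L/2 + L/2 = L from by ring, hLdef,
          Real.exp_log (by positivity)]
      have h2 : Real.exp (L/2) = Real.sqrt (m/16) := by
        rw [← h1, Real.sqrt_sq (Real.exp_pos _).le]
      have h3 : Real.sqrt (m/16) = Real.sqrt m / 4 := by
        rw [Real.sqrt_div hm0.le, show Real.sqrt 16 = 4 from by
          rw [show (16:ℝ) = 4^2 from by norm_num, Real.sqrt_sq (by norm_num : (0:ℝ) ≤ 4)]]
      rw [Real.exp_neg, h2, h3, inv_div]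
    have hxlb : (3/10)/Real.sqrt (jstar:ℝ) * (4/Real.sqrt m) ≤ x (jstar+1) := by
      calc (3/10)/Real.sqrt (jstar:ℝ) * (4/Real.sqrt m)
          = (3/10)/Real.sqrt (jstar:ℝ) * Real.exp (-(L/2)) := by rw [hexpval]
        _ ≤ (3/10)/Real.sqrt (jstar:ℝ) * Real.exp (-(2*((jstar:ℝ) - m)^2/m)) :=
            mul_le_mul_of_nonneg_left hexp1 (by positivity)
        _ = (3/10)/Real.sqrt (jstar:ℝ) *
              Real.exp (-(2*((jstar:ℝ) - p * ((n:ℝ)-1))^2/(p * ((n:ℝ)-1)))) := by rw [hmdef]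
        _ ≤ (3/10)/Real.sqrt (jstar:ℝ) *
              ((p * ((n:ℝ)-1) / (jstar:ℝ))^jstar * ((1-p) * ((n:ℝ)-1) / (b:ℝ))^b) :=
            mul_le_mul_of_nonneg_left hklo (by positivity)
        _ ≤ ((n-1).choose jstar : ℝ) * p^jstar * (1-p)^b := hlow
        _ = x (jstar+1) := hxval.symm
    -- final contradiction
    have hjeq : (jstar:ℝ) = Real.sqrt (jstar:ℝ) * Real.sqrt (jstar:ℝ) :=
      (Real.mul_self_sqrt hjq.le).symm
    have hsmj : Real.sqrt m < Real.sqrt (jstar:ℝ) := Real.sqrt_lt_sqrt hm0.le hjm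
    have hfin : 1 < (jstar:ℝ) * ((3/10)/Real.sqrt (jstar:ℝ) * (4/Real.sqrt m)) := by
      have he1 : (jstar:ℝ) * ((3/10)/Real.sqrt (jstar:ℝ) * (4/Real.sqrt m))
          = (6/5) * (Real.sqrt (jstar:ℝ) / Real.sqrt m) := by
        rw [hjeq]
        field_simp
        rw [Real.sq_sqrt (sq_nonneg _)]
        ring
      rw [he1]
      have h2 : 1 < Real.sqrt (jstar:ℝ) / Real.sqrt m := (one_lt_div hsm).mpr hsmj
      linarith
    have hcomb := mul_le_mul_of_nonneg_left hxlb hjq.le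
    linarith
end
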